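/- arXiv:0901.0574 — 2 statements merged into one kernel-verified Lean document; each statement's English description precedes it below -/
import Mathlib

section
/- Let μ¹, μ² be Borel probability measures on Σ = I × I that disintegrate along vertical leaves as μⁱ(A) = ∫_{γ∈I} μⁱ_γ(A ∩ γ) dμⁱ_x with μⁱ_x absolutely continuous with respect to Lebesgue. If (1) W₁(μ¹_γ, μ²_γ) ≤ ε for almost every leaf γ, and (2) sup_{‖h‖_∞ ≤ 1} |∫h dμ¹_x − ∫h dμ²_x| ≤ δ, then W₁(μ¹, μ²) ≤ ε + δ. -/
open MeasureTheory
set_option linter.unusedSectionVars false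
set_option maxHeartbeats 1000000

/-- The unit interval `I = [-1/2, 1/2]`. -/
abbrev II : Set ℝ := Set.Icc (-(1 : ℝ) / 2) (1 / 2)

/-- Lebesgue measure on the interval `I`, as a measure on the subtype. -/
noncomputable def volII : Measure II := (volume : Measure ℝ).comap Subtype.val

/-- The Wasserstein-Kantorovich distance defined by duality with 1-Lipschitz test functions. -/
noncomputable def W1 {Y : Type*} [MetricSpace Y] [MeasurableSpace Y]
    (μ ν : Measure Y) : ℝ :=
  sSup {x : ℝ | ∃ g : Y → ℝ, LipschitzWith 1 g ∧ x = |∫ y, g y ∂μ - ∫ y, g y ∂ν|}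

/-! ### Auxiliary lemmas -/

lemma dist_II_le (a b : II) : dist a b ≤ 1 := by
  have ha := a.2; have hb := b.2
  simp only [Set.mem_Icc] at ha hb
  rw [Subtype.dist_eq, Real.dist_eq, abs_le]
  constructor <;> linarith

lemma dist_prod_le (p q : II × II) : dist p q ≤ 1 := by
  rw [Prod.dist_eq]; exact max_le (dist_II_le _ _) (dist_II_le _ _)

def y0 : II := ⟨0, by constructor <;> norm_num⟩

lemma volII_univ : volII Set.univ = 1 := by
  rw [volII, MeasurableEmbedding.comap_apply (MeasurableEmbedding.subtype_coe measurableSet_Icc)]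
  rw [Subtype.coe_image_univ, Real.volume_Icc]
  norm_num

instance : IsProbabilityMeasure volII := ⟨volII_univ⟩

section W1lemmas
variable {Y : Type*} [MetricSpace Y] [MeasurableSpace Y] [OpensMeasurableSpace Y]

lemma integrable_of_bdd {μ : Measure Y} [IsFiniteMeasure μ] {h : Y → ℝ} {C : ℝ}
    (hm : Measurable h) (hb : ∀ y, |h y| ≤ C) : Integrable h μ :=
  (integrable_const C).mono' hm.aestronglyMeasurable (Filter.Eventually.of_forall
    fun y => by simpa using hb y)

lemma lip_bdd (hd : ∀ a b : Y, dist a b ≤ 1) (p0 : Y) {g : Y → ℝ}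
    (hg : LipschitzWith 1 g) (y : Y) : |g y - g p0| ≤ 1 := by
  have := hg.dist_le_mul y p0
  rw [Real.dist_eq] at this
  exact this.trans (by simpa using hd y p0)

lemma abs_integral_sub_le (hd : ∀ a b : Y, dist a b ≤ 1) (p0 : Y)
    (μ ν : Measure Y) [IsProbabilityMeasure μ] [IsProbabilityMeasure ν]
    {g : Y → ℝ} (hg : LipschitzWith 1 g) :
    |∫ y, g y ∂μ - ∫ y, g y ∂ν| ≤ 2 := by
  have hgm : Measurable g := hg.continuous.measurable
  have hbd : ∀ y, |g y| ≤ |g p0| + 1 := by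
    intro y
    have := lip_bdd hd p0 hg y
    have := abs_sub_abs_le_abs_sub (g y) (g p0)
    linarith [abs_nonneg (g y - g p0)]
  have hint : ∀ (κ : Measure Y) [IsProbabilityMeasure κ], Integrable g κ := by
    intro κ _; exact integrable_of_bdd hgm hbd
  have key : ∀ (κ : Measure Y) [IsProbabilityMeasure κ],
      |∫ y, g y ∂κ - g p0| ≤ 1 := by
    intro κ _
    have h1 : ∫ y, g y ∂κ - g p0 = ∫ y, (g y - g p0) ∂κ := by
      rw [integral_sub (hint κ) (integrable_const _), integral_const]
      simp
    rw [h1]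
    calc |∫ y, (g y - g p0) ∂κ| = ‖∫ y, (g y - g p0) ∂κ‖ := rfl
      _ ≤ 1 * (κ Set.univ).toReal := norm_integral_le_of_norm_le_const
          (Filter.Eventually.of_forall fun y => by simpa using lip_bdd hd p0 hg y)
      _ = 1 := by simp
  have : |(∫ y, g y ∂μ - g p0) - (∫ y, g y ∂ν - g p0)| ≤ 2 :=
    (abs_sub _ _).trans (by linarith [key μ, key ν])
  simpa using this

lemma W1_bddAbove (hd : ∀ a b : Y, dist a b ≤ 1) (p0 : Y)
    (μ ν : Measure Y) [IsProbabilityMeasure μ] [IsProbabilityMeasure ν] :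
    BddAbove {x : ℝ | ∃ g : Y → ℝ, LipschitzWith 1 g ∧ x = |∫ y, g y ∂μ - ∫ y, g y ∂ν|} := by
  refine ⟨2, ?_⟩
  rintro x ⟨g, hg, rfl⟩
  exact abs_integral_sub_le hd p0 μ ν hg

lemma W1_mem_zero (μ ν : Measure Y) :
    (0:ℝ) ∈ {x : ℝ | ∃ g : Y → ℝ, LipschitzWith 1 g ∧ x = |∫ y, g y ∂μ - ∫ y, g y ∂ν|} :=
  ⟨fun _ => 0, (LipschitzWith.const (0:ℝ)).weaken zero_le_one, by simp⟩

lemma W1_nonneg (hd : ∀ a b : Y, dist a b ≤ 1) (p0 : Y)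
    (μ ν : Measure Y) [IsProbabilityMeasure μ] [IsProbabilityMeasure ν] :
    0 ≤ W1 μ ν :=
  le_csSup (W1_bddAbove hd p0 μ ν) (W1_mem_zero μ ν)

lemma W1_symm (μ ν : Measure Y) : W1 μ ν = W1 ν μ := by
  unfold W1
  congr 1
  ext x
  constructor <;> rintro ⟨g, hg, rfl⟩ <;> exact ⟨g, hg, (abs_sub_comm _ _)⟩

lemma le_of_W1_le (hd : ∀ a b : Y, dist a b ≤ 1) (p0 : Y)
    (μ ν : Measure Y) [IsProbabilityMeasure μ] [IsProbabilityMeasure ν]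
    {g : Y → ℝ} (hg : LipschitzWith 1 g) {ε : ℝ} (hW : W1 μ ν ≤ ε) :
    ∫ y, g y ∂μ - ∫ y, g y ∂ν ≤ ε :=
  (le_abs_self _).trans <| (le_csSup (W1_bddAbove hd p0 μ ν) ⟨g, hg, rfl⟩).trans hW

end W1lemmas

/-! ### Disintegration lemmas for lower Lebesgue integrals -/

lemma lower_add {α : Type*} [MeasurableSpace α] (μ : Measure α) (f g : α → ENNReal) :
    ∫⁻ a, f a ∂μ + ∫⁻ a, g a ∂μ ≤ ∫⁻ a, (f a + g a) ∂μ := by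
  obtain ⟨f', hf'm, hf'le, hf'⟩ := exists_measurable_le_lintegral_eq μ f
  obtain ⟨g', hg'm, hg'le, hg'⟩ := exists_measurable_le_lintegral_eq μ g
  rw [hf', hg', ← lintegral_add_left hf'm]
  exact lintegral_mono fun a => add_le_add (hf'le a) (hg'le a)

section disint
variable (μ : Measure (II × II)) (μγ : II → Measure II) (μx : Measure II)

lemma lint_disint_le [IsProbabilityMeasure μx]
    (hp : ∀ γ, IsProbabilityMeasure (μγ γ))
    (hdis : ∀ A : Set (II × II), MeasurableSet A →
      μ A = ∫⁻ γ, μγ γ {y | (γ, y) ∈ A} ∂μx)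
    {f : II × II → ENNReal} (hf : Measurable f) :
    ∫⁻ p, f p ∂μ ≤ ∫⁻ γ, ∫⁻ y, f (γ, y) ∂(μγ γ) ∂μx := by
  revert hf
  refine fun hf => Measurable.ennreal_induction (motive := fun f =>
      ∫⁻ p, f p ∂μ ≤ ∫⁻ γ, ∫⁻ y, f (γ, y) ∂(μγ γ) ∂μx) ?_ ?_ ?_ hf
  · intro c s hs
    have h1 : ∀ γ : II, (fun y => Set.indicator s (fun _ => c) (γ, y))
        = Set.indicator {y | (γ, y) ∈ s} (fun _ => c) := by
      intro γ; funext y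
      by_cases h : (γ, y) ∈ s <;> simp [Set.indicator, h]
    have h2 : ∀ γ : II, ∫⁻ y, Set.indicator s (fun _ => c) (γ, y) ∂(μγ γ)
        = c * μγ γ {y | (γ, y) ∈ s} := by
      intro γ
      rw [h1 γ]
      exact lintegral_indicator_const
        (show MeasurableSet {y : II | (γ, y) ∈ s} from measurable_prodMk_left hs) c
    obtain ⟨m', hm'meas, hm'le, hm'eq⟩ := exists_measurable_le_lintegral_eq μx
      (fun γ => μγ γ {y | (γ, y) ∈ s})
    calc ∫⁻ p, Set.indicator s (fun _ => c) p ∂μ = c * μ s :=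
          lintegral_indicator_const hs c
      _ = c * ∫⁻ γ, μγ γ {y | (γ, y) ∈ s} ∂μx := by rw [hdis s hs]
      _ = c * ∫⁻ γ, m' γ ∂μx := by rw [hm'eq]
      _ = ∫⁻ γ, c * m' γ ∂μx := (lintegral_const_mul c hm'meas).symm
      _ ≤ ∫⁻ γ, c * μγ γ {y | (γ, y) ∈ s} ∂μx :=
          lintegral_mono fun γ => mul_le_mul_right (hm'le γ) c
      _ = _ := lintegral_congr fun γ => (h2 γ).symm
  · intro f g _ hfm hgm hPf hPg
    calc ∫⁻ p, (f p + g p) ∂μ = ∫⁻ p, f p ∂μ + ∫⁻ p, g p ∂μ := lintegral_add_left hfm _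
      _ ≤ (∫⁻ γ, ∫⁻ y, f (γ, y) ∂(μγ γ) ∂μx) + ∫⁻ γ, ∫⁻ y, g (γ, y) ∂(μγ γ) ∂μx :=
          add_le_add hPf hPg
      _ ≤ ∫⁻ γ, ((∫⁻ y, f (γ, y) ∂(μγ γ)) + ∫⁻ y, g (γ, y) ∂(μγ γ)) ∂μx :=
          lower_add _ _ _
      _ = _ := by
          refine lintegral_congr fun γ => ?_
          exact (lintegral_add_left (f := fun y => f (γ, y))
            (hfm.comp measurable_prodMk_left) (fun y => g (γ, y))).symm
  · intro f hfm hmono hP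
    calc ∫⁻ p, (⨆ n, f n p) ∂μ = ⨆ n, ∫⁻ p, f n p ∂μ := lintegral_iSup hfm hmono
      _ ≤ ⨆ n, ∫⁻ γ, ∫⁻ y, f n (γ, y) ∂(μγ γ) ∂μx := iSup_mono hP
      _ ≤ _ := iSup_le fun n => lintegral_mono fun γ => lintegral_mono fun y =>
          le_iSup (fun n => f n (γ, y)) n

lemma lint_disint_eq [IsProbabilityMeasure μ] [IsProbabilityMeasure μx]
    (hp : ∀ γ, IsProbabilityMeasure (μγ γ))
    (hdis : ∀ A : Set (II × II), MeasurableSet A →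
      μ A = ∫⁻ γ, μγ γ {y | (γ, y) ∈ A} ∂μx)
    {f : II × II → ENNReal} (hf : Measurable f) (hbd : ∀ p, f p ≤ 2) :
    ∫⁻ p, f p ∂μ = ∫⁻ γ, ∫⁻ y, f (γ, y) ∂(μγ γ) ∂μx := by
  set Φ : II → ENNReal := fun γ => ∫⁻ y, f (γ, y) ∂(μγ γ) with hΦ
  have hΦ2 : ∀ γ, Φ γ ≤ 2 := fun γ => by
    have := hp γ
    calc Φ γ ≤ ∫⁻ _, 2 ∂(μγ γ) := lintegral_mono fun y => hbd _
      _ = 2 := by simp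
  have hA : ∫⁻ p, f p ∂μ ≤ ∫⁻ γ, Φ γ ∂μx := lint_disint_le μ μγ μx hp hdis hf
  have hfμ2 : ∫⁻ p, f p ∂μ ≤ 2 := by
    calc ∫⁻ p, f p ∂μ ≤ ∫⁻ _, 2 ∂μ := lintegral_mono fun y => hbd _
      _ = 2 := by simp
  have hΦμ2 : ∫⁻ γ, Φ γ ∂μx ≤ 2 := by
    calc ∫⁻ γ, Φ γ ∂μx ≤ ∫⁻ _, 2 ∂μx := lintegral_mono fun γ => hΦ2 _
      _ = 2 := by simp
  have hsub : ∫⁻ p, (2 - f p) ∂μ ≤ ∫⁻ γ, ∫⁻ y, (2 - f (γ, y)) ∂(μγ γ) ∂μx :=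
    lint_disint_le μ μγ μx hp hdis (measurable_const.sub hf)
  have hL : ∫⁻ p, (2 - f p) ∂μ = 2 - ∫⁻ p, f p ∂μ := by
    rw [lintegral_sub hf (hfμ2.trans_lt (by norm_num)).ne
      (Filter.Eventually.of_forall hbd)]
    simp
  have hR : ∀ γ, ∫⁻ y, (2 - f (γ, y)) ∂(μγ γ) = 2 - Φ γ := by
    intro γ
    have := hp γ
    have hfin : Φ γ ≠ ⊤ := ((hΦ2 γ).trans_lt (by norm_num)).ne
    rw [lintegral_sub (g := fun y => f (γ, y)) (hf.comp measurable_prodMk_left) hfin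
      (Filter.Eventually.of_forall fun y => hbd _)]
    simp
    rfl
  have hsup : ∫⁻ γ, (2 - Φ γ) ∂μx ≤ 2 - ∫⁻ γ, Φ γ ∂μx := by
    have h1 : ∫⁻ γ, (2 - Φ γ) ∂μx + ∫⁻ γ, Φ γ ∂μx ≤ 2 := by
      calc ∫⁻ γ, (2 - Φ γ) ∂μx + ∫⁻ γ, Φ γ ∂μx ≤ ∫⁻ γ, ((2 - Φ γ) + Φ γ) ∂μx :=
            lower_add _ _ _
        _ = ∫⁻ _, (2:ENNReal) ∂μx := lintegral_congr fun γ =>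
            tsub_add_cancel_of_le (hΦ2 γ)
        _ = 2 := by simp
    exact ENNReal.le_sub_of_add_le_right ((hΦμ2.trans_lt (by norm_num)).ne) h1
  have hB : ∫⁻ γ, Φ γ ∂μx ≤ ∫⁻ p, f p ∂μ := by
    have h2 : 2 - ∫⁻ p, f p ∂μ ≤ 2 - ∫⁻ γ, Φ γ ∂μx := by
      rw [← hL]
      refine hsub.trans ?_
      refine le_trans (le_of_eq (lintegral_congr fun γ => hR γ)) hsup
    have := tsub_le_tsub_left h2 (2:ENNReal)
    rwa [ENNReal.sub_sub_cancel (by norm_num) hfμ2,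
      ENNReal.sub_sub_cancel (by norm_num) hΦμ2] at this
  exact le_antisymm hA hB

end disint

/-! ### The main one-sided estimate -/

lemma onesided
    (μ1 μ2 : Measure (II × II)) [IsProbabilityMeasure μ1] [IsProbabilityMeasure μ2]
    (μγ1 μγ2 : II → Measure II)
    (hp1 : ∀ γ, IsProbabilityMeasure (μγ1 γ)) (hp2 : ∀ γ, IsProbabilityMeasure (μγ2 γ))
    (μx1 μx2 : Measure II) [IsProbabilityMeasure μx1] [IsProbabilityMeasure μx2]
    (hac2 : μx2 ≪ volII)
    (hdis1 : ∀ A : Set (II × II), MeasurableSet A →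
      μ1 A = ∫⁻ γ, μγ1 γ {y | (γ, y) ∈ A} ∂μx1)
    (hdis2 : ∀ A : Set (II × II), MeasurableSet A →
      μ2 A = ∫⁻ γ, μγ2 γ {y | (γ, y) ∈ A} ∂μx2)
    (ε δ : ℝ) (hε : 0 ≤ ε)
    (hleaf : ∀ᵐ γ ∂volII, W1 (μγ1 γ) (μγ2 γ) ≤ ε)
    (hmarg : ∀ h : II → ℝ, Measurable h → (∀ γ, |h γ| ≤ 1) →
      |(∫ γ, h γ ∂μx1) - ∫ γ, h γ ∂μx2| ≤ δ)
    (g : II × II → ℝ) (hg : LipschitzWith 1 g) (hgb : ∀ p, |g p| ≤ 1) :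
    (∫ p, g p ∂μ1) - ∫ p, g p ∂μ2 ≤ ε + δ := by
  set G : II × II → ℝ := fun p => g p + 1 with hG
  have hGmeas : Measurable G := (hg.continuous.measurable).add measurable_const
  have hG0 : ∀ p, 0 ≤ G p := fun p => by have := (abs_le.mp (hgb p)).1; simp [hG]; linarith
  have hG2 : ∀ p, G p ≤ 2 := fun p => by have := (abs_le.mp (hgb p)).2; simp [hG]; linarith
  set fE : II × II → ENNReal := fun p => ENNReal.ofReal (G p) with hfE
  have hfEmeas : Measurable fE := ENNReal.measurable_ofReal.comp hGmeas
  have hfE2 : ∀ p, fE p ≤ 2 := fun p => by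
    calc fE p ≤ ENNReal.ofReal 2 := ENNReal.ofReal_le_ofReal (hG2 p)
      _ = 2 := by norm_num
  have hIint : ∀ (κ : Measure (II × II)) [IsProbabilityMeasure κ], Integrable G κ := by
    intro κ _
    exact integrable_of_bdd hGmeas (fun p => abs_le.mpr ⟨by linarith [hG0 p], hG2 p⟩)
  have hI : ∀ (κ : Measure (II × II)) [IsProbabilityMeasure κ],
      ∫ p, G p ∂κ = (∫⁻ p, fE p ∂κ).toReal := by
    intro κ _
    rw [← ofReal_integral_eq_lintegral_ofReal (hIint κ)
      (Filter.Eventually.of_forall hG0), ENNReal.toReal_ofReal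
      (integral_nonneg hG0)]
  set Φ1 : II → ENNReal := fun γ => ∫⁻ y, fE (γ, y) ∂(μγ1 γ) with hΦ1
  set Φ2 : II → ENNReal := fun γ => ∫⁻ y, fE (γ, y) ∂(μγ2 γ) with hΦ2
  have hΦbd : ∀ γ, Φ1 γ ≤ 2 ∧ Φ2 γ ≤ 2 := by
    intro γ
    have := hp1 γ; have := hp2 γ
    constructor
    · calc Φ1 γ ≤ ∫⁻ _, 2 ∂(μγ1 γ) := lintegral_mono fun y => hfE2 _
        _ = 2 := by simp
    · calc Φ2 γ ≤ ∫⁻ _, 2 ∂(μγ2 γ) := lintegral_mono fun y => hfE2 _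
        _ = 2 := by simp
  have hΦreal : ∀ γ, (Φ1 γ).toReal = ∫ y, G (γ, y) ∂(μγ1 γ) ∧
      (Φ2 γ).toReal = ∫ y, G (γ, y) ∂(μγ2 γ) := by
    intro γ
    have := hp1 γ; have := hp2 γ
    have h1 : ∀ (κ : Measure II) [IsProbabilityMeasure κ],
        (∫⁻ y, fE (γ, y) ∂κ).toReal = ∫ y, G (γ, y) ∂κ := by
      intro κ _
      have hint : Integrable (fun y => G (γ, y)) κ :=
        integrable_of_bdd (hGmeas.comp measurable_prodMk_left)
          (fun y => abs_le.mpr ⟨by linarith [hG0 (γ, y)], hG2 (γ, y)⟩)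
      rw [← ofReal_integral_eq_lintegral_ofReal (f := fun y => G (γ, y)) hint
        (Filter.Eventually.of_forall fun y => hG0 (γ, y)),
        ENNReal.toReal_ofReal (integral_nonneg fun y => hG0 (γ, y))]
    exact ⟨h1 (μγ1 γ), h1 (μγ2 γ)⟩
  have hd1 : ∫⁻ p, fE p ∂μ1 = ∫⁻ γ, Φ1 γ ∂μx1 :=
    lint_disint_eq μ1 μγ1 μx1 hp1 hdis1 hfEmeas hfE2
  have hd2 : ∫⁻ p, fE p ∂μ2 = ∫⁻ γ, Φ2 γ ∂μx2 :=
    lint_disint_eq μ2 μγ2 μx2 hp2 hdis2 hfEmeas hfE2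
  obtain ⟨ψ, hψmeas, hψle, hψeq⟩ := exists_measurable_le_lintegral_eq μx1 Φ1
  have hψ2 : ∀ γ, ψ γ ≤ 2 := fun γ => (hψle γ).trans (hΦbd γ).1
  have hψfin : ∀ γ, ψ γ ≠ ⊤ := fun γ => ((hψ2 γ).trans_lt (by norm_num)).ne
  set h : II → ℝ := fun γ => (ψ γ).toReal - 1 with hh
  have hhmeas : Measurable h := hψmeas.ennreal_toReal.sub measurable_const
  have htR2 : ∀ γ, (ψ γ).toReal ≤ 2 := fun γ => by
    have := ENNReal.toReal_mono (by norm_num) (hψ2 γ)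
    simpa using this
  have hhb : ∀ γ, |h γ| ≤ 1 := fun γ => by
    have h0 : 0 ≤ (ψ γ).toReal := ENNReal.toReal_nonneg
    have h2 := htR2 γ
    rw [abs_le]
    constructor
    · simp only [hh]; linarith
    · simp only [hh]; linarith
  have hmargh := hmarg h hhmeas hhb
  have hintψ : ∀ (κ : Measure II) [IsProbabilityMeasure κ],
      Integrable (fun γ => (ψ γ).toReal) κ := by
    intro κ _
    exact integrable_of_bdd hψmeas.ennreal_toReal
      (fun γ => abs_le.mpr ⟨by linarith [ENNReal.toReal_nonneg (a := ψ γ)], htR2 γ⟩)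
  have hinth : ∀ (κ : Measure II) [IsProbabilityMeasure κ],
      ∫ γ, h γ ∂κ = (∫ γ, (ψ γ).toReal ∂κ) - 1 := by
    intro κ _
    rw [hh]
    rw [integral_sub (hintψ κ) (integrable_const 1), integral_const]
    simp
  have hmarg2 : (∫ γ, (ψ γ).toReal ∂μx1) - ∫ γ, (ψ γ).toReal ∂μx2 ≤ δ := by
    rw [hinth μx1, hinth μx2] at hmargh
    have := (abs_le.mp hmargh).2
    linarith [ (abs_le.mp hmargh).2, le_abs_self ((∫ γ, h γ ∂μx1) - ∫ γ, h γ ∂μx2)]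
  have hψtoReal : ∀ (κ : Measure II) [IsProbabilityMeasure κ],
      ∫ γ, (ψ γ).toReal ∂κ = (∫⁻ γ, ψ γ ∂κ).toReal := by
    intro κ _
    exact integral_toReal hψmeas.aemeasurable
      (Filter.Eventually.of_forall fun γ => (hψ2 γ).trans_lt (by norm_num))
  have hae0 : ∀ᵐ γ ∂volII, ψ γ ≤ Φ2 γ + ENNReal.ofReal ε := by
    filter_upwards [hleaf] with γ hγ
    have := hp1 γ; have := hp2 γ
    have hlip : LipschitzWith 1 (fun y => g (γ, y)) := by
      refine LipschitzWith.of_dist_le_mul fun y z => ?_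
      refine (hg.dist_le_mul (γ, y) (γ, z)).trans ?_
      rw [Prod.dist_eq]
      simp only [dist_self]
      rw [max_eq_right dist_nonneg]
    have eG : ∀ (κ : Measure II) [IsProbabilityMeasure κ],
        ∫ y, G (γ, y) ∂κ = (∫ y, g (γ, y) ∂κ) + 1 := by
      intro κ _
      have hgint : Integrable (fun y => g (γ, y)) κ :=
        integrable_of_bdd (hg.continuous.measurable.comp measurable_prodMk_left)
          (fun y => hgb (γ, y))
      calc ∫ y, G (γ, y) ∂κ = ∫ y, (g (γ, y) + 1) ∂κ := rfl
        _ = (∫ y, g (γ, y) ∂κ) + ∫ _, (1:ℝ) ∂κ := integral_add hgint (integrable_const 1)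
        _ = (∫ y, g (γ, y) ∂κ) + 1 := by rw [integral_const]; simp
    have hleafint : (∫ y, G (γ, y) ∂(μγ1 γ)) - ∫ y, G (γ, y) ∂(μγ2 γ) ≤ ε := by
      have := le_of_W1_le dist_II_le y0 (μγ1 γ) (μγ2 γ) hlip hγ
      rw [eG (μγ1 γ), eG (μγ2 γ)]; linarith
    have hfin1 : Φ1 γ ≠ ⊤ := ((hΦbd γ).1.trans_lt (by norm_num)).ne
    have hfin2 : Φ2 γ ≠ ⊤ := ((hΦbd γ).2.trans_lt (by norm_num)).ne
    calc ψ γ ≤ Φ1 γ := hψle γ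
      _ = ENNReal.ofReal ((Φ1 γ).toReal) := (ENNReal.ofReal_toReal hfin1).symm
      _ ≤ ENNReal.ofReal ((Φ2 γ).toReal + ε) := by
          apply ENNReal.ofReal_le_ofReal
          rw [(hΦreal γ).1, (hΦreal γ).2]
          linarith
      _ ≤ ENNReal.ofReal ((Φ2 γ).toReal) + ENNReal.ofReal ε := ENNReal.ofReal_add_le
      _ = Φ2 γ + ENNReal.ofReal ε := by rw [ENNReal.ofReal_toReal hfin2]
  have hae : ∀ᵐ γ ∂μx2, ψ γ ≤ Φ2 γ + ENNReal.ofReal ε := hac2.ae_le hae0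
  have hkey : ∫⁻ γ, ψ γ ∂μx2 ≤ (∫⁻ γ, Φ2 γ ∂μx2) + ENNReal.ofReal ε := by
    set c := ENNReal.ofReal ε with hc
    have step1 : ∫⁻ γ, ψ γ ∂μx2 ≤ (∫⁻ γ, (ψ γ - c) ∂μx2) + c := by
      calc ∫⁻ γ, ψ γ ∂μx2 ≤ ∫⁻ γ, ((ψ γ - c) + c) ∂μx2 :=
            lintegral_mono fun γ => le_tsub_add
        _ = (∫⁻ γ, (ψ γ - c) ∂μx2) + c := by
            rw [lintegral_add_right _ measurable_const, lintegral_const]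
            simp
    have step2 : ∫⁻ γ, (ψ γ - c) ∂μx2 ≤ ∫⁻ γ, Φ2 γ ∂μx2 := by
      refine lintegral_mono_ae ?_
      filter_upwards [hae] with γ hγ
      exact tsub_le_iff_right.mpr hγ
    exact step1.trans (add_le_add_left step2 c)
  have hΦ2fin : ∫⁻ γ, Φ2 γ ∂μx2 ≤ 2 := by
    calc ∫⁻ γ, Φ2 γ ∂μx2 ≤ ∫⁻ _, 2 ∂μx2 := lintegral_mono fun γ => (hΦbd γ).2
      _ = 2 := by simp
  have main : ∫ p, G p ∂μ1 ≤ (∫ p, G p ∂μ2) + ε + δ := by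
    have c1 : ∫ p, G p ∂μ1 = (∫⁻ γ, ψ γ ∂μx1).toReal := by
      rw [hI μ1, hd1, hψeq]
    have c2 : (∫⁻ γ, ψ γ ∂μx1).toReal = ∫ γ, (ψ γ).toReal ∂μx1 := (hψtoReal μx1).symm
    have c3 : ∫ γ, (ψ γ).toReal ∂μx2 = (∫⁻ γ, ψ γ ∂μx2).toReal := hψtoReal μx2
    have c4 : (∫⁻ γ, ψ γ ∂μx2).toReal ≤ (∫ p, G p ∂μ2) + ε := by
      have := ENNReal.toReal_mono (by
        refine ENNReal.add_ne_top.mpr ⟨(hΦ2fin.trans_lt (by norm_num)).ne, ENNReal.ofReal_ne_top⟩) hkey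
      rw [ENNReal.toReal_add (hΦ2fin.trans_lt (by norm_num)).ne ENNReal.ofReal_ne_top,
        ENNReal.toReal_ofReal hε] at this
      rw [hI μ2, hd2]
      exact this
    calc ∫ p, G p ∂μ1 = ∫ γ, (ψ γ).toReal ∂μx1 := by rw [c1, c2]
      _ ≤ (∫ γ, (ψ γ).toReal ∂μx2) + δ := by linarith [hmarg2]
      _ ≤ (∫ p, G p ∂μ2) + ε + δ := by
          rw [c3]; linarith [c4]
  have eg : ∀ (κ : Measure (II × II)) [IsProbabilityMeasure κ],
      ∫ p, G p ∂κ = (∫ p, g p ∂κ) + 1 := by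
    intro κ _
    calc ∫ p, G p ∂κ = ∫ p, (g p + 1) ∂κ := rfl
      _ = (∫ p, g p ∂κ) + ∫ _, (1:ℝ) ∂κ := integral_add
          (integrable_of_bdd hg.continuous.measurable hgb) (integrable_const 1)
      _ = (∫ p, g p ∂κ) + 1 := by rw [integral_const]; simp
  rw [eg μ1, eg μ2] at main
  linarith

/-- Estimate of the Wasserstein distance between two disintegrated measures on
`Σ = I × I` in terms of the distances on the vertical leaves and the marginals. -/
theorem stmt8
    (μ1 μ2 : Measure (II × II)) [IsProbabilityMeasure μ1] [IsProbabilityMeasure μ2]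
    (μγ1 μγ2 : II → Measure II)
    (hp1 : ∀ γ, IsProbabilityMeasure (μγ1 γ)) (hp2 : ∀ γ, IsProbabilityMeasure (μγ2 γ))
    (μx1 μx2 : Measure II) [IsProbabilityMeasure μx1] [IsProbabilityMeasure μx2]
    (hac1 : μx1 ≪ volII) (hac2 : μx2 ≪ volII)
    (hdis1 : ∀ A : Set (II × II), MeasurableSet A →
      μ1 A = ∫⁻ γ, μγ1 γ {y | (γ, y) ∈ A} ∂μx1)
    (hdis2 : ∀ A : Set (II × II), MeasurableSet A →
      μ2 A = ∫⁻ γ, μγ2 γ {y | (γ, y) ∈ A} ∂μx2)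
    (ε δ : ℝ)
    (hleaf : ∀ᵐ γ ∂volII, W1 (μγ1 γ) (μγ2 γ) ≤ ε)
    (hmarg : ∀ h : II → ℝ, Measurable h → (∀ γ, |h γ| ≤ 1) →
      |(∫ γ, h γ ∂μx1) - ∫ γ, h γ ∂μx2| ≤ δ) :
    W1 μ1 μ2 ≤ ε + δ := by
  have hε : 0 ≤ ε := by
    obtain ⟨γ, hγ⟩ := hleaf.exists
    have := hp1 γ; have := hp2 γ
    exact le_trans (W1_nonneg dist_II_le y0 (μγ1 γ) (μγ2 γ)) hγ
  have hδ : 0 ≤ δ := by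
    have := hmarg (fun _ => 0) measurable_const (fun γ => by simp)
    simpa using this
  have hleaf' : ∀ᵐ γ ∂volII, W1 (μγ2 γ) (μγ1 γ) ≤ ε := by
    filter_upwards [hleaf] with γ hγ
    rwa [W1_symm]
  have hmarg' : ∀ h : II → ℝ, Measurable h → (∀ γ, |h γ| ≤ 1) →
      |(∫ γ, h γ ∂μx2) - ∫ γ, h γ ∂μx1| ≤ δ := fun h hm hb => by
    rw [abs_sub_comm]; exact hmarg h hm hb
  refine csSup_le ⟨0, W1_mem_zero μ1 μ2⟩ ?_
  rintro x ⟨g, hg, rfl⟩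
  set p0 : II × II := (y0, y0) with hp0
  set g' : II × II → ℝ := fun p => g p - g p0 with hg'
  have hg'lip : LipschitzWith 1 g' := by
    refine LipschitzWith.of_dist_le_mul fun p q => ?_
    have := hg.dist_le_mul p q
    simpa [hg', Real.dist_eq, sub_sub_sub_cancel_right] using this
  have hg'b : ∀ p, |g' p| ≤ 1 := fun p => lip_bdd dist_prod_le p0 hg p
  have hgint : ∀ (κ : Measure (II × II)) [IsProbabilityMeasure κ], Integrable g κ := by
    intro κ _
    refine integrable_of_bdd hg.continuous.measurable (C := |g p0| + 1) fun p => ?_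
    have := lip_bdd dist_prod_le p0 hg p
    have := abs_sub_abs_le_abs_sub (g p) (g p0)
    linarith [abs_nonneg (g p - g p0)]
  have hval : ∀ (κ : Measure (II × II)) [IsProbabilityMeasure κ],
      ∫ p, g' p ∂κ = (∫ p, g p ∂κ) - g p0 := by
    intro κ _
    calc ∫ p, g' p ∂κ = (∫ p, g p ∂κ) - ∫ _, g p0 ∂κ :=
          integral_sub (hgint κ) (integrable_const _)
      _ = (∫ p, g p ∂κ) - g p0 := by rw [integral_const]; simp
  have hx : |(∫ p, g p ∂μ1) - ∫ p, g p ∂μ2| = |(∫ p, g' p ∂μ1) - ∫ p, g' p ∂μ2| := by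
    rw [hval μ1, hval μ2]
    ring_nf
  rw [hx, abs_le]
  constructor
  · have := onesided μ2 μ1 μγ2 μγ1 hp2 hp1 μx2 μx1 hac1 hdis2 hdis1 ε δ hε
      hleaf' hmarg' g' hg'lip hg'b
    linarith
  · exact onesided μ1 μ2 μγ1 μγ2 hp1 hp2 μx1 μx2 hac2 hdis1 hdis2 ε δ hε
      hleaf hmarg g' hg'lip hg'b
end

section
/- Let μ_n be a sequence of Borel probability measures on Σ = I × I, each K-good (i.e., the leaf-restriction map γ ↦ μ_n|_γ from I to the space of finite measures on I with the W₁⁰ metric has total variation at most K). Let f : Σ → ℝ be ℓ-Lipschitz with ‖f‖_∞ ≤ ℓ, and ν_n = f·μ_n. Then each ν_n is (3ℓK + ℓ)-good. -/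
open MeasureTheory

/-- The modified Wasserstein distance on finite measures on `I`, using test functions
that are `1`-Lipschitz with sup norm at most `1`. -/
noncomputable def W10 (μ ν : Measure II) : ℝ :=
  sSup {x : ℝ | ∃ g : II → ℝ, LipschitzWith 1 g ∧ (∀ y, |g y| ≤ 1) ∧
    x = |∫ y, g y ∂μ - ∫ y, g y ∂ν|}

/-- The map `γ ↦ G γ` (leaf restrictions) has total variation at most `K` with respect
to the `W₁⁰` metric. -/
def VarLe (K : ℝ) (G : II → Measure II) : Prop :=
  ∀ (n : ℕ) (x : ℕ → II), Monotone x →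
    ∑ i ∈ Finset.range n, W10 (G (x i)) (G (x (i + 1))) ≤ K

lemma W10_nonneg (μ ν : Measure II) : 0 ≤ W10 μ ν := by
  apply Real.sSup_nonneg
  rintro x ⟨g, -, -, rfl⟩
  exact abs_nonneg _

lemma W10_bddAbove (μ ν : Measure II) [IsFiniteMeasure μ] [IsFiniteMeasure ν] :
    BddAbove {x : ℝ | ∃ g : II → ℝ, LipschitzWith 1 g ∧ (∀ y, |g y| ≤ 1) ∧
      x = |∫ y, g y ∂μ - ∫ y, g y ∂ν|} := by
  refine ⟨(μ Set.univ).toReal + (ν Set.univ).toReal, ?_⟩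
  rintro x ⟨g, hg, hb, rfl⟩
  have h1 : ‖∫ y, g y ∂μ‖ ≤ 1 * (μ Set.univ).toReal :=
    norm_integral_le_of_norm_le_const (Filter.Eventually.of_forall fun y => by
      simpa [Real.norm_eq_abs] using hb y)
  have h2 : ‖∫ y, g y ∂ν‖ ≤ 1 * (ν Set.univ).toReal :=
    norm_integral_le_of_norm_le_const (Filter.Eventually.of_forall fun y => by
      simpa [Real.norm_eq_abs] using hb y)
  rw [one_mul, Real.norm_eq_abs] at h1 h2
  calc |∫ y, g y ∂μ - ∫ y, g y ∂ν| ≤ |∫ y, g y ∂μ| + |∫ y, g y ∂ν| := abs_sub _ _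
    _ ≤ (μ Set.univ).toReal + (ν Set.univ).toReal := add_le_add h1 h2

lemma le_W10 {μ ν : Measure II} [IsFiniteMeasure μ] [IsFiniteMeasure ν]
    {g : II → ℝ} (hg : LipschitzWith 1 g) (hb : ∀ y, |g y| ≤ 1) :
    |∫ y, g y ∂μ - ∫ y, g y ∂ν| ≤ W10 μ ν :=
  le_csSup (W10_bddAbove μ ν) ⟨g, hg, hb, rfl⟩

lemma W10_le {μ ν : Measure II} {B : ℝ} (hB : 0 ≤ B)
    (h : ∀ g : II → ℝ, LipschitzWith 1 g → (∀ y, |g y| ≤ 1) →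
      |∫ y, g y ∂μ - ∫ y, g y ∂ν| ≤ B) : W10 μ ν ≤ B := by
  apply Real.sSup_le _ hB
  rintro x ⟨g, hg, hb, rfl⟩
  exact h g hg hb

lemma W10_symm (μ ν : Measure II) : W10 μ ν = W10 ν μ := by
  unfold W10
  congr 1
  ext x
  constructor <;> rintro ⟨g, hg, hb, rfl⟩ <;>
    exact ⟨g, hg, hb, abs_sub_comm _ _⟩

lemma abs_integral_sub_le_W10 {μ ν : Measure II} [IsFiniteMeasure μ] [IsFiniteMeasure ν]
    {h : II → ℝ} {c : ℝ} (hc : 0 ≤ c) (hlip : ∀ a b : II, dist (h a) (h b) ≤ c * dist a b)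
    (hb : ∀ y, |h y| ≤ c) :
    |∫ y, h y ∂μ - ∫ y, h y ∂ν| ≤ c * W10 μ ν := by
  rcases eq_or_lt_of_le hc with h0 | h0
  · have hz : ∀ y, h y = 0 := fun y =>
      abs_eq_zero.mp (le_antisymm (h0 ▸ hb y) (abs_nonneg _))
    simp only [hz, integral_zero, sub_zero, abs_zero]
    exact mul_nonneg hc (W10_nonneg _ _)
  · set g : II → ℝ := fun y => c⁻¹ * h y with hgdef
    have hg : LipschitzWith 1 g := by
      apply LipschitzWith.of_dist_le_mul
      intro a b
      have : dist (g a) (g b) = c⁻¹ * dist (h a) (h b) := by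
        simp only [hgdef, Real.dist_eq, ← mul_sub, abs_mul, abs_of_pos (inv_pos.mpr h0)]
      rw [this]
      calc c⁻¹ * dist (h a) (h b) ≤ c⁻¹ * (c * dist a b) := by
            apply mul_le_mul_of_nonneg_left (hlip a b) (le_of_lt (inv_pos.mpr h0))
        _ = 1 * dist a b := by field_simp
        _ = ↑(1 : NNReal) * dist a b := by norm_num
    have hgb : ∀ y, |g y| ≤ 1 := by
      intro y
      rw [hgdef]
      simp only [abs_mul, abs_of_pos (inv_pos.mpr h0)]
      calc c⁻¹ * |h y| ≤ c⁻¹ * c := mul_le_mul_of_nonneg_left (hb y) (le_of_lt (inv_pos.mpr h0))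
        _ = 1 := by field_simp
    have key := le_W10 (μ := μ) (ν := ν) hg hgb
    have e1 : ∫ y, g y ∂μ = c⁻¹ * ∫ y, h y ∂μ := integral_const_mul _ _
    have e2 : ∫ y, g y ∂ν = c⁻¹ * ∫ y, h y ∂ν := integral_const_mul _ _
    rw [e1, e2, ← mul_sub, abs_mul, abs_of_pos (inv_pos.mpr h0)] at key
    calc |∫ y, h y ∂μ - ∫ y, h y ∂ν| = c * (c⁻¹ * |∫ y, h y ∂μ - ∫ y, h y ∂ν|) := by
          field_simp
      _ ≤ c * W10 μ ν := mul_le_mul_of_nonneg_left key (le_of_lt h0)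

lemma integrable_of_bdd_s17 {μ : Measure II} [IsFiniteMeasure μ] {φ : II → ℝ} {C : ℝ}
    (hφ : Continuous φ) (hb : ∀ y, |φ y| ≤ C) : Integrable φ μ :=
  (integrable_const C).mono' hφ.aestronglyMeasurable
    (Filter.Eventually.of_forall fun y => by simpa [Real.norm_eq_abs] using hb y)

lemma W10_pair_le {K : ℝ} {G : II → Measure II} (h : VarLe K G) (a b : II) :
    W10 (G a) (G b) ≤ K := by
  have main : ∀ a b : II, a ≤ b → W10 (G a) (G b) ≤ K := by
    intro a b hab
    have hx : Monotone (fun i : ℕ => if i = 0 then a else b) := by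
      intro i j hij
      dsimp only
      split_ifs with hi hj hj
      · exact le_refl _
      · exact hab
      · exact absurd (Nat.le_zero.mp (hj ▸ hij)) hi
      · exact le_refl _
    have := h 1 (fun i => if i = 0 then a else b) hx
    simpa using this
  rcases le_total a b with hab | hab
  · exact main a b hab
  · rw [W10_symm]; exact main b a hab

lemma abs_mass_sub_le_W10 (μ ν : Measure II) [IsFiniteMeasure μ] [IsFiniteMeasure ν] :
    |(μ Set.univ).toReal - (ν Set.univ).toReal| ≤ W10 μ ν := by
  have hg : LipschitzWith 1 (fun _ : II => (1 : ℝ)) :=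
    (LipschitzWith.const 1).weaken (zero_le_one)
  have := le_W10 (μ := μ) (ν := ν) hg (fun y => by norm_num)
  simpa [integral_const, smul_eq_mul, Measure.real] using this

lemma mass_le {K : ℝ} (hK : 0 ≤ K) (Gn : II → Measure II)
    (hfin : ∀ γ, IsFiniteMeasure (Gn γ))
    (μn : Measure (II × II)) (hprob : IsProbabilityMeasure μn)
    (hdis : ∀ A : Set (II × II), MeasurableSet A →
      μn A = ∫⁻ γ, Gn γ {y | (γ, y) ∈ A} ∂volII)
    (hgood : VarLe K Gn) : ∀ γ, Gn γ Set.univ ≤ ENNReal.ofReal (1 + K) := by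
  by_contra h'
  push_neg at h'
  obtain ⟨γ1, hγ1⟩ := h'
  haveI := fun γ => hfin γ
  have hne : ∀ γ, Gn γ Set.univ ≠ ⊤ := fun γ => measure_ne_top _ _
  have h1 : 1 + K < (Gn γ1 Set.univ).toReal :=
    (ENNReal.ofReal_lt_iff_lt_toReal (by linarith) (hne γ1)).mp hγ1
  have hm : ∀ γ, 1 < (Gn γ Set.univ).toReal := by
    intro γ
    have habs := abs_mass_sub_le_W10 (Gn γ1) (Gn γ)
    have hW := W10_pair_le hgood γ1 γ
    have := abs_le.mp (habs.trans hW)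
    linarith [this.1]
  -- lower bound for the lintegral
  have c1 : (1 : ENNReal) = μn Set.univ := (hprob.measure_univ).symm
  have c2 : μn Set.univ = ∫⁻ γ, Gn γ Set.univ ∂volII := by
    rw [hdis Set.univ MeasurableSet.univ]
    rfl
  set c : ℝ := (Gn γ1 Set.univ).toReal - K with hc
  have hc1 : 1 < c := by rw [hc]; linarith
  have hle : ∀ γ, ENNReal.ofReal c ≤ Gn γ Set.univ := by
    intro γ
    apply ENNReal.ofReal_le_of_le_toReal
    have habs := abs_mass_sub_le_W10 (Gn γ1) (Gn γ)
    have hW := W10_pair_le hgood γ1 γ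
    have := abs_le.mp (habs.trans hW)
    rw [hc]; linarith [this.1]
  have hlb : ENNReal.ofReal c * volII Set.univ ≤ ∫⁻ γ, Gn γ Set.univ ∂volII := by
    rw [← lintegral_const]
    exact lintegral_mono hle
  rw [volII_univ, mul_one] at hlb
  have : (1 : ENNReal) < ENNReal.ofReal c := ENNReal.one_lt_ofReal.mpr hc1
  rw [c1, c2] at this
  exact absurd hlb (not_le.mpr this)

/-- Lemma 8.10: if each `μ_n` is a `K`-good probability measure on `Σ = I × I` and
`f` is `ℓ`-Lipschitz with `‖f‖_∞ ≤ ℓ`, then each `ν_n = f·μ_n` is `(3ℓK + ℓ)`-good. -/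
theorem stmt17 (K : ℝ) (hK : 0 ≤ K) (ℓ : NNReal)
    (μ : ℕ → Measure (II × II)) (hprob : ∀ n, IsProbabilityMeasure (μ n))
    (G : ℕ → II → Measure II) (hfin : ∀ n γ, IsFiniteMeasure (G n γ))
    (hdis : ∀ n, ∀ A : Set (II × II), MeasurableSet A →
      μ n A = ∫⁻ γ, G n γ {y | (γ, y) ∈ A} ∂volII)
    (hgood : ∀ n, VarLe K (G n))
    (f : II × II → ℝ) (hf_lip : LipschitzWith ℓ f)
    (hf_nonneg : ∀ p, 0 ≤ f p) (hf_bdd : ∀ p, |f p| ≤ (ℓ : ℝ))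
    (ν : ℕ → Measure (II × II))
    (hν : ∀ n, ν n = (μ n).withDensity (fun p => ENNReal.ofReal (f p)))
    (Gν : ℕ → II → Measure II)
    (hGν : ∀ n γ, Gν n γ = (G n γ).withDensity (fun y => ENNReal.ofReal (f (γ, y)))) :
    ∀ n, VarLe (3 * (ℓ : ℝ) * K + (ℓ : ℝ)) (Gν n) := by
  -- distance estimate for f with same second coordinate
  have hfd : ∀ (γ γ' y : II), |f (γ, y) - f (γ', y)| ≤ (ℓ : ℝ) * dist γ γ' := by
    intro γ γ' y
    have := hf_lip.dist_le_mul (γ, y) (γ', y)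
    rw [Real.dist_eq, Prod.dist_eq] at this
    simpa [dist_self, sup_eq_left.mpr (dist_nonneg (x := γ) (y := γ'))] using this
  -- the key pairwise estimate
  have key : ∀ n (γ γ' : II),
      W10 (Gν n γ) (Gν n γ') ≤
        2 * (ℓ : ℝ) * W10 (G n γ) (G n γ') + (ℓ : ℝ) * dist γ γ' * (1 + K) := by
    intro n γ γ'
    haveI := hfin n γ
    haveI := hfin n γ'
    have hmass : G n γ' Set.univ ≤ ENNReal.ofReal (1 + K) :=
      mass_le hK (G n) (hfin n) (μ n) (hprob n) (hdis n) (hgood n) γ'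
    rw [hGν n γ, hGν n γ']
    apply W10_le
    · have := W10_nonneg (G n γ) (G n γ')
      have hd := dist_nonneg (x := γ) (y := γ')
      have hl : (0:ℝ) ≤ (ℓ:ℝ) := ℓ.coe_nonneg
      positivity
    intro g hg hgb
    -- rewrite the integrals against the densities
    have hcont : ∀ δ : II, Continuous (fun y : II => f (δ, y)) :=
      fun δ => hf_lip.continuous.comp (Continuous.prodMk_right δ)
    have hmeas : ∀ δ : II, Measurable (fun y : II => (f (δ, y)).toNNReal) :=
      fun δ => (continuous_real_toNNReal.comp (hcont δ)).measurable
    have erw : ∀ (δ : II) (m : Measure II),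
        ∫ y, g y ∂(m.withDensity fun y => ENNReal.ofReal (f (δ, y)))
          = ∫ y, f (δ, y) * g y ∂m := by
      intro δ m
      have : (fun y : II => ENNReal.ofReal (f (δ, y)))
          = fun y => ((f (δ, y)).toNNReal : ENNReal) := rfl
      rw [this, integral_withDensity_eq_integral_smul (hmeas δ)]
      congr 1
      ext y
      simp [NNReal.smul_def, Real.coe_toNNReal _ (hf_nonneg _)]
    rw [erw γ, erw γ']
    set h1 : II → ℝ := fun y => f (γ, y) * g y with hh1
    set h2 : II → ℝ := fun y => f (γ', y) * g y with hh2
    have hgc : Continuous g := hg.continuous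
    have hb1 : ∀ y, |h1 y| ≤ (ℓ : ℝ) := by
      intro y
      rw [hh1]
      calc |f (γ, y) * g y| = |f (γ, y)| * |g y| := abs_mul _ _
        _ ≤ (ℓ : ℝ) * 1 := mul_le_mul (hf_bdd _) (hgb y) (abs_nonneg _) ℓ.coe_nonneg
        _ = (ℓ : ℝ) := mul_one _
    have hb2 : ∀ y, |h2 y| ≤ (ℓ : ℝ) := by
      intro y
      rw [hh2]
      calc |f (γ', y) * g y| = |f (γ', y)| * |g y| := abs_mul _ _
        _ ≤ (ℓ : ℝ) * 1 := mul_le_mul (hf_bdd _) (hgb y) (abs_nonneg _) ℓ.coe_nonneg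
        _ = (ℓ : ℝ) := mul_one _
    have hint1 : Integrable h1 (G n γ') :=
      integrable_of_bdd_s17 ((hcont γ).mul hgc) hb1
    have hint2 : Integrable h2 (G n γ') :=
      integrable_of_bdd_s17 ((hcont γ').mul hgc) hb2
    -- split
    have split : ∫ y, h1 y ∂(G n γ) - ∫ y, h2 y ∂(G n γ')
        = (∫ y, h1 y ∂(G n γ) - ∫ y, h1 y ∂(G n γ'))
          - ∫ y, (h2 y - h1 y) ∂(G n γ') := by
      rw [integral_sub hint2 hint1]
      ring
    rw [split]
    -- first term
    have hA : |∫ y, h1 y ∂(G n γ) - ∫ y, h1 y ∂(G n γ')|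
        ≤ 2 * (ℓ : ℝ) * W10 (G n γ) (G n γ') := by
      refine abs_integral_sub_le_W10 (by positivity) ?_ ?_
      · intro a b
        rw [Real.dist_eq, hh1]
        have e : f (γ, a) * g a - f (γ, b) * g b
            = f (γ, a) * (g a - g b) + g b * (f (γ, a) - f (γ, b)) := by ring
        rw [e]
        have hgab : |g a - g b| ≤ dist a b := by
          have := hg.dist_le_mul a b
          rw [Real.dist_eq] at this
          simpa using this
        have t1 : |f (γ, a) * (g a - g b)| ≤ (ℓ : ℝ) * dist a b := by
          rw [abs_mul]
          exact mul_le_mul (hf_bdd _) hgab (abs_nonneg _) ℓ.coe_nonneg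
        have hfab : |f (γ, a) - f (γ, b)| ≤ (ℓ : ℝ) * dist a b := by
          have := hf_lip.dist_le_mul (γ, a) (γ, b)
          rw [Real.dist_eq, Prod.dist_eq] at this
          simpa [dist_self, sup_eq_right.mpr (dist_nonneg (x := a) (y := b))] using this
        have t2 : |g b * (f (γ, a) - f (γ, b))| ≤ (ℓ : ℝ) * dist a b := by
          rw [abs_mul]
          calc |g b| * |f (γ, a) - f (γ, b)| ≤ 1 * ((ℓ : ℝ) * dist a b) :=
                mul_le_mul (hgb b) hfab (abs_nonneg _) zero_le_one
            _ = (ℓ : ℝ) * dist a b := one_mul _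
        calc |f (γ, a) * (g a - g b) + g b * (f (γ, a) - f (γ, b))|
            ≤ |f (γ, a) * (g a - g b)| + |g b * (f (γ, a) - f (γ, b))| := abs_add_le _ _
          _ ≤ (ℓ : ℝ) * dist a b + (ℓ : ℝ) * dist a b := add_le_add t1 t2
          _ = 2 * (ℓ : ℝ) * dist a b := by ring
      · intro y
        calc |h1 y| ≤ (ℓ : ℝ) := hb1 y
          _ ≤ 2 * (ℓ : ℝ) := by linarith [ℓ.coe_nonneg]
    -- second term
    have hB : |∫ y, (h2 y - h1 y) ∂(G n γ')| ≤ (ℓ : ℝ) * dist γ γ' * (1 + K) := by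
      have hbd : ∀ᵐ y ∂(G n γ'), ‖h2 y - h1 y‖ ≤ (ℓ : ℝ) * dist γ γ' := by
        apply Filter.Eventually.of_forall
        intro y
        rw [Real.norm_eq_abs, hh1, hh2]
        have e : f (γ', y) * g y - f (γ, y) * g y = (f (γ', y) - f (γ, y)) * g y := by ring
        rw [e, abs_mul]
        calc |f (γ', y) - f (γ, y)| * |g y| ≤ ((ℓ : ℝ) * dist γ' γ) * 1 :=
              mul_le_mul (hfd γ' γ y) (hgb y) (abs_nonneg _) (by positivity)
          _ = (ℓ : ℝ) * dist γ γ' := by rw [mul_one, dist_comm]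
      have := norm_integral_le_of_norm_le_const (μ := G n γ') hbd
      rw [Real.norm_eq_abs] at this
      refine this.trans ?_
      have hmt : (G n γ' Set.univ).toReal ≤ 1 + K := by
        have := ENNReal.toReal_mono (by simp) hmass
        rwa [ENNReal.toReal_ofReal (by linarith)] at this
      have : (0:ℝ) ≤ (ℓ : ℝ) * dist γ γ' := by positivity
      calc (ℓ : ℝ) * dist γ γ' * (G n γ' Set.univ).toReal
          ≤ (ℓ : ℝ) * dist γ γ' * (1 + K) := mul_le_mul_of_nonneg_left hmt this
        _ = (ℓ : ℝ) * dist γ γ' * (1 + K) := rfl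
    calc |(∫ y, h1 y ∂(G n γ) - ∫ y, h1 y ∂(G n γ')) - ∫ y, (h2 y - h1 y) ∂(G n γ')|
        ≤ |∫ y, h1 y ∂(G n γ) - ∫ y, h1 y ∂(G n γ')| + |∫ y, (h2 y - h1 y) ∂(G n γ')| :=
          abs_sub _ _
      _ ≤ 2 * (ℓ : ℝ) * W10 (G n γ) (G n γ') + (ℓ : ℝ) * dist γ γ' * (1 + K) :=
          add_le_add hA hB
  -- assemble
  intro n m x hx
  have hsum1 : ∑ i ∈ Finset.range m, W10 (G n (x i)) (G n (x (i + 1))) ≤ K :=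
    hgood n m x hx
  have hsum2 : ∑ i ∈ Finset.range m, dist (x i) (x (i + 1)) ≤ 1 := by
    have hd : ∀ i, dist (x i) (x (i + 1)) = ((x (i + 1) : ℝ) - (x i : ℝ)) := by
      intro i
      rw [Subtype.dist_eq, Real.dist_eq, abs_of_nonpos (by
        have : (x i : ℝ) ≤ (x (i + 1) : ℝ) := hx (Nat.le_succ i)
        linarith)]
      ring
    rw [Finset.sum_congr rfl (fun i _ => hd i), Finset.sum_range_sub (fun i => ((x i : ℝ)))]
    have h1 : (x m : ℝ) ≤ 1 / 2 := (x m).2.2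
    have h2 : -(1:ℝ) / 2 ≤ (x 0 : ℝ) := (x 0).2.1
    linarith
  calc ∑ i ∈ Finset.range m, W10 (Gν n (x i)) (Gν n (x (i + 1)))
      ≤ ∑ i ∈ Finset.range m, (2 * (ℓ : ℝ) * W10 (G n (x i)) (G n (x (i + 1)))
          + (ℓ : ℝ) * dist (x i) (x (i + 1)) * (1 + K)) :=
        Finset.sum_le_sum (fun i _ => key n (x i) (x (i + 1)))
    _ = 2 * (ℓ : ℝ) * (∑ i ∈ Finset.range m, W10 (G n (x i)) (G n (x (i + 1))))
          + (ℓ : ℝ) * (1 + K) * (∑ i ∈ Finset.range m, dist (x i) (x (i + 1))) := by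
        rw [Finset.sum_add_distrib, Finset.mul_sum, Finset.mul_sum]
        congr 1
        apply Finset.sum_congr rfl
        intro i _
        ring
    _ ≤ 2 * (ℓ : ℝ) * K + (ℓ : ℝ) * (1 + K) * 1 := by
        have hl : (0:ℝ) ≤ (ℓ:ℝ) := ℓ.coe_nonneg
        have t1 : 2 * (ℓ : ℝ) * (∑ i ∈ Finset.range m, W10 (G n (x i)) (G n (x (i + 1))))
            ≤ 2 * (ℓ : ℝ) * K := mul_le_mul_of_nonneg_left hsum1 (by positivity)
        have t2 : (ℓ : ℝ) * (1 + K) * (∑ i ∈ Finset.range m, dist (x i) (x (i + 1)))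
            ≤ (ℓ : ℝ) * (1 + K) * 1 := mul_le_mul_of_nonneg_left hsum2 (by positivity)
        linarith
    _ = 3 * (ℓ : ℝ) * K + (ℓ : ℝ) := by ring
end
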